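/- Let Φ be a positive, trace-preserving, unital linear map on n×n complex matrices (Φ maps positive semidefinite matrices to positive semidefinite matrices, Tr Φ(X) = Tr X, and Φ(I) = I). Then for every density matrix ρ, the von Neumann entropy does not decrease: S(Φ(ρ)) ≥ S(ρ), where S(ρ) = −Tr(ρ log ρ). -/

import Mathlib

open scoped ComplexOrder Classical

/-- The von Neumann entropy `S(ρ) = −Tr(ρ log ρ)` of a Hermitian matrix, computed from
its eigenvalues with the convention `0 log 0 = 0` (and set to `0` on non-Hermitian input). -/
noncomputable def vonNeumannEntropy {n : ℕ} (ρ : Matrix (Fin n) (Fin n) ℂ) : ℝ :=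
  if h : ρ.IsHermitian then ∑ i, Real.negMulLog (h.eigenvalues i) else 0

section AuxEntropy
open Matrix

private lemma rankOne_posSemidef {n : ℕ} (x : Fin n → ℂ) :
    (Matrix.vecMulVec x (star x)).PosSemidef := by
  refine Matrix.PosSemidef.of_dotProduct_mulVec_nonneg ?_ ?_
  · ext a b
    simp [Matrix.vecMulVec_apply, Matrix.conjTranspose_apply, mul_comm]
  · intro y
    have : star y ⬝ᵥ (Matrix.vecMulVec x (star x) *ᵥ y)
        = (star y ⬝ᵥ x) * star (star y ⬝ᵥ x) := by
      simp only [dotProduct, Matrix.mulVec, Matrix.vecMulVec_apply, Pi.star_apply,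
        Finset.mul_sum, Finset.sum_mul, star_sum, star_mul', star_star]
      rw [Finset.sum_comm]
      congr 1; ext a; congr 1; ext b; ring
    rw [this]
    exact mul_star_self_nonneg _

private lemma completeness {n : ℕ} {A : Matrix (Fin n) (Fin n) ℂ} (hA : A.IsHermitian)
    (a b : Fin n) :
    ∑ j, hA.eigenvectorBasis j a * star (hA.eigenvectorBasis j b)
      = (1 : Matrix (Fin n) (Fin n) ℂ) a b := by
  have h := (Matrix.mem_unitaryGroup_iff).mp (hA.eigenvectorUnitary).2
  have h2 := congrFun (congrFun (congrArg (fun M : Matrix (Fin n) (Fin n) ℂ => M) h) a) b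
  simp only [Matrix.mul_apply, Matrix.star_apply, Matrix.IsHermitian.eigenvectorUnitary_apply] at h2
  simpa using h2

private lemma spectral_sum {n : ℕ} {A : Matrix (Fin n) (Fin n) ℂ} (hA : A.IsHermitian) :
    A = ∑ j, (hA.eigenvalues j : ℂ) •
      Matrix.vecMulVec (⇑(hA.eigenvectorBasis j)) (star ⇑(hA.eigenvectorBasis j)) := by
  conv_lhs => rw [hA.spectral_theorem]
  ext a b
  simp [Matrix.mul_apply, Matrix.diagonal_apply, Matrix.sum_apply,
    Matrix.vecMulVec_apply, Matrix.IsHermitian.eigenvectorUnitary_apply, Matrix.star_apply,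
    Finset.sum_ite_eq, mul_comm, mul_assoc, mul_left_comm]

private lemma basis_norm {n : ℕ} {A : Matrix (Fin n) (Fin n) ℂ} (hA : A.IsHermitian) (j : Fin n) :
    star (⇑(hA.eigenvectorBasis j)) ⬝ᵥ ⇑(hA.eigenvectorBasis j) = 1 := by
  have h := hA.eigenvectorBasis.orthonormal.1 j
  have : (inner ℂ (hA.eigenvectorBasis j) (hA.eigenvectorBasis j) : ℂ) = 1 := by
    rw [inner_self_eq_norm_sq_to_K, h]; norm_num
  rw [EuclideanSpace.inner_eq_star_dotProduct] at this
  simpa [dotProduct_comm] using this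

private lemma trace_eq_sum {n : ℕ} {A : Matrix (Fin n) (Fin n) ℂ} (hA : A.IsHermitian)
    (M : Matrix (Fin n) (Fin n) ℂ) :
    ∑ i, star (⇑(hA.eigenvectorBasis i)) ⬝ᵥ (M *ᵥ ⇑(hA.eigenvectorBasis i)) = M.trace := by
  have key : ∀ a b : Fin n,
      ∑ i, hA.eigenvectorBasis i b * (starRingEnd ℂ) (hA.eigenvectorBasis i a)
        = (1 : Matrix (Fin n) (Fin n) ℂ) b a := fun a b => by
    simpa using completeness hA b a
  calc ∑ i, star (⇑(hA.eigenvectorBasis i)) ⬝ᵥ (M *ᵥ ⇑(hA.eigenvectorBasis i))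
      = ∑ a, ∑ b, M a b * ∑ i, (hA.eigenvectorBasis i b * (starRingEnd ℂ) (hA.eigenvectorBasis i a)) := by
        simp only [dotProduct, Matrix.mulVec, Pi.star_apply, Finset.mul_sum,
          Finset.sum_mul]
        rw [Finset.sum_comm]
        refine Finset.sum_congr rfl fun a _ => ?_
        rw [Finset.sum_comm]
        refine Finset.sum_congr rfl fun b _ => Finset.sum_congr rfl fun i _ => by
          simp only [Complex.star_def]; ring
    _ = M.trace := by
        simp only [key]
        simp_rw [Matrix.one_apply, mul_ite, mul_one, mul_zero, Finset.sum_ite_eq',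
          Finset.mem_univ, if_true]
        rfl

private lemma dot_sum_mulVec {n : ℕ} (x y : Fin n → ℂ)
    (M : Fin n → Matrix (Fin n) (Fin n) ℂ) :
    star x ⬝ᵥ ((∑ j, M j) *ᵥ y) = ∑ j, star x ⬝ᵥ (M j *ᵥ y) := by
  have h1 : (∑ j, M j) *ᵥ y = ∑ j, (M j *ᵥ y) := by
    ext a
    simp only [Matrix.mulVec, dotProduct, Matrix.sum_apply, Finset.sum_apply,
      Finset.sum_mul]
    rw [Finset.sum_comm]
  rw [h1]
  simp only [dotProduct, Finset.sum_apply, Finset.mul_sum]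
  rw [Finset.sum_comm]

end AuxEntropy

open Matrix in
/-- A positive, trace-preserving, unital linear map does not decrease the von Neumann
entropy of any density matrix. -/
theorem entropy_nondecreasing_of_unital_PTP {n : ℕ}
    (Φ : Matrix (Fin n) (Fin n) ℂ →ₗ[ℂ] Matrix (Fin n) (Fin n) ℂ)
    (hpos : ∀ X : Matrix (Fin n) (Fin n) ℂ, X.PosSemidef → (Φ X).PosSemidef)
    (htr : ∀ X : Matrix (Fin n) (Fin n) ℂ, (Φ X).trace = X.trace)
    (hunital : Φ 1 = 1)
    (ρ : Matrix (Fin n) (Fin n) ℂ) (hρ : ρ.PosSemidef) (hρtr : ρ.trace = 1) :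
    vonNeumannEntropy ρ ≤ vonNeumannEntropy (Φ ρ) := by
  classical
  have hH : ρ.IsHermitian := hρ.1
  have hσ : (Φ ρ).PosSemidef := hpos ρ hρ
  have hσH : (Φ ρ).IsHermitian := hσ.1
  set u : Fin n → (Fin n → ℂ) := fun j => ⇑(hH.eigenvectorBasis j) with hu
  set lam : Fin n → ℝ := fun j => hH.eigenvalues j with hlam
  set v : Fin n → (Fin n → ℂ) := fun i => ⇑(hσH.eigenvectorBasis i) with hv
  set mu : Fin n → ℝ := fun i => hσH.eigenvalues i with hmudef
  set P : Fin n → Matrix (Fin n) (Fin n) ℂ := fun j => Matrix.vecMulVec (u j) (star (u j)) with hP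
  set c : Fin n → Fin n → ℂ := fun i j => star (v i) ⬝ᵥ (Φ (P j) *ᵥ v i) with hcdef
  have hΦP : ∀ j, (Φ (P j)).PosSemidef := fun j => hpos _ (rankOne_posSemidef (u j))
  have hc_nonneg : ∀ i j, 0 ≤ c i j := fun i j => (hΦP j).dotProduct_mulVec_nonneg (v i)
  set B : Fin n → Fin n → ℝ := fun i j => (c i j).re with hBdef
  have hB_nonneg : ∀ i j, 0 ≤ B i j := fun i j => (RCLike.nonneg_iff.mp (hc_nonneg i j)).1
  have hc_eq : ∀ i j, c i j = (B i j : ℂ) := by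
    intro i j
    have h := (RCLike.nonneg_iff.mp (hc_nonneg i j)).2
    exact Complex.ext rfl (by simpa using h)
  have hPsum : ∑ j, P j = 1 := by
    ext a b
    simp only [Matrix.sum_apply, hP, Matrix.vecMulVec_apply, Pi.star_apply]
    exact completeness hH a b
  have hrow : ∀ i, ∑ j, B i j = 1 := by
    intro i
    have h1 : ∑ j, Φ (P j) = 1 := by rw [← map_sum, hPsum, hunital]
    have h2 : ∑ j, c i j = 1 := by
      calc ∑ j, c i j = star (v i) ⬝ᵥ ((∑ j, Φ (P j)) *ᵥ v i) := by
            rw [dot_sum_mulVec]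
        _ = 1 := by rw [h1, Matrix.one_mulVec]; exact basis_norm hσH i
    have := congrArg Complex.re h2
    simpa [hBdef, Complex.re_sum] using this
  have hcol : ∀ j, ∑ i, B i j = 1 := by
    intro j
    have h1 : ∑ i, c i j = (Φ (P j)).trace := trace_eq_sum hσH _
    have h2 : (Φ (P j)).trace = 1 := by
      rw [htr]
      have ht : (P j).trace = star (u j) ⬝ᵥ (u j) := by
        simp [Matrix.trace, Matrix.diag, hP, Matrix.vecMulVec_apply, dotProduct, mul_comm]
      rw [ht, basis_norm hH j]
    have := congrArg Complex.re (h1.trans h2)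
    simpa [hBdef, Complex.re_sum] using this
  have hmu : ∀ i, mu i = ∑ j, B i j * lam j := by
    intro i
    have hΦρ : Φ ρ = ∑ j, (lam j : ℂ) • Φ (P j) := by
      conv_lhs => rw [spectral_sum hH]
      rw [map_sum]
      simp only [LinearMap.map_smul]
      rfl
    have h0 : Φ ρ *ᵥ v i = (mu i) • v i := hσH.mulVec_eigenvectorBasis i
    have hmc : (mu i : ℂ) = ∑ j, (lam j : ℂ) * c i j := by
      calc (mu i : ℂ) = star (v i) ⬝ᵥ (Φ ρ *ᵥ v i) := by
            rw [h0]
            rw [show ((mu i) • v i : Fin n → ℂ) = ((mu i : ℂ)) • v i from by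
              ext a; simp [Complex.real_smul]]
            rw [dotProduct_smul, basis_norm hσH i]
            simp
        _ = ∑ j, (lam j : ℂ) * c i j := by
            rw [hΦρ, dot_sum_mulVec (M := fun j => (lam j : ℂ) • Φ (P j))]
            refine Finset.sum_congr rfl fun j _ => ?_
            rw [Matrix.smul_mulVec, dotProduct_smul, smul_eq_mul]
    have := congrArg Complex.re hmc
    simp only [Complex.ofReal_re, Complex.re_sum] at this
    rw [this]
    refine Finset.sum_congr rfl fun j _ => ?_
    rw [hc_eq i j]
    simp [mul_comm]
  unfold vonNeumannEntropy
  rw [dif_pos hH, dif_pos hσH]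
  have jensen : ∀ i, ∑ j, B i j * Real.negMulLog (lam j) ≤ Real.negMulLog (mu i) := by
    intro i
    have h := Real.concaveOn_negMulLog.le_map_sum (t := Finset.univ) (w := B i) (p := lam)
      (fun j _ => hB_nonneg i j) (hrow i) (fun j _ => hρ.eigenvalues_nonneg j)
    simpa [smul_eq_mul, ← hmu i] using h
  calc ∑ j, Real.negMulLog (lam j)
      = ∑ j, (∑ i, B i j) * Real.negMulLog (lam j) := by
        refine Finset.sum_congr rfl fun j _ => ?_
        rw [hcol j, one_mul]
    _ = ∑ i, ∑ j, B i j * Real.negMulLog (lam j) := by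
        rw [Finset.sum_comm]
        refine Finset.sum_congr rfl fun j _ => ?_
        rw [Finset.sum_mul]
    _ ≤ ∑ i, Real.negMulLog (mu i) := Finset.sum_le_sum fun i _ => jensen i
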